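/- Let ν be the arcsine law on [0,1] and let k ≥ 1. Let D_k^{(J)} be the k×k lower-triangular matrix with entries (D_k^{(J)})_{i,j} = (2^{−2i+1}/√2)·C(2i, i−j) for 1 ≤ j ≤ i ≤ k and 0 otherwise. Then for all 1 ≤ i, j ≤ k, (D_k^{(J)} (D_k^{(J)})^T)_{i,j} = m_{i+j}(ν) − m_i(ν)·m_j(ν). -/

import Mathlib

open MeasureTheory Matrix

/-- The arcsine law on `[0,1]`: `ν(dx) = (1/(π√(x(1−x))))·1_{(0,1)}(x) dx`. -/
noncomputable def arcsineLaw : Measure ℝ :=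
  volume.withDensity fun x =>
    ENNReal.ofReal
      (if 0 < x ∧ x < 1 then 1 / (Real.pi * Real.sqrt (x * (1 - x))) else 0)

/-- The `r`-th moment of the arcsine law. -/
noncomputable def mAS (r : ℕ) : ℝ := ∫ x, x ^ r ∂arcsineLaw

/-- The lower-triangular matrix `D_k^{(J)}` (indices `1 ≤ i, j ≤ k`, here realised by
`Fin k` with `i ↦ i+1`): entries `(2^{−2i+1}/√2)·C(2i, i−j)` for `j ≤ i` and `0`
otherwise. -/
noncomputable def DJac (k : ℕ) : Matrix (Fin k) (Fin k) ℝ := fun i j =>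
  if j.1 ≤ i.1 then
    (2 : ℝ) ^ (-(2 * ((i.1 : ℤ) + 1)) + 1) / Real.sqrt 2 *
      ((2 * (i.1 + 1)).choose ((i.1 + 1) - (j.1 + 1)) : ℝ)
  else 0

section Combinatorics

lemma halfSum (I J : ℕ) :
    ∑ l ∈ Finset.range J, (2*I).choose (I+l+1) * (2*J).choose (J-(l+1)) =
    ∑ l ∈ Finset.range (min I J), (2*I).choose (I-(l+1)) * (2*J).choose (J-(l+1)) := by
  rw [← Finset.sum_subset (Finset.range_subset_range.2 (min_le_right I J))]
  · refine Finset.sum_congr rfl fun l hl => ?_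
    rw [Finset.mem_range, lt_min_iff] at hl
    congr 1
    have h1 : I + l + 1 ≤ 2 * I := by omega
    have : (2*I).choose (2*I - (I+l+1)) = (2*I).choose (I+l+1) := Nat.choose_symm h1
    rw [← this]
    congr 1
    omega
  · intro l hl hl'
    rw [Finset.mem_range] at hl
    rw [Finset.mem_range, lt_min_iff, not_and_or] at hl'
    have : I + l + 1 > 2 * I := by omega
    rw [Nat.choose_eq_zero_of_lt this, zero_mul]

lemma vand (I J : ℕ) :
    (2*(I+J)).choose (I+J) =
      (2*I).choose I * (2*J).choose J +
        2 * ∑ l ∈ Finset.range (min I J), (2*I).choose (I-(l+1)) * (2*J).choose (J-(l+1)) := by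
  have h : 2*(I+J) = 2*I + 2*J := by ring
  rw [h, Nat.add_choose_eq, Finset.Nat.sum_antidiagonal_eq_sum_range_succ_mk]
  have hsplit : ∑ p ∈ Finset.range (I+J+1), (2*I).choose p * (2*J).choose (I+J-p)
      = (∑ p ∈ Finset.range (I+1), (2*I).choose p * (2*J).choose (I+J-p))
        + ∑ l ∈ Finset.range J, (2*I).choose (I+1+l) * (2*J).choose (I+J-(I+1+l)) := by
    have := Finset.sum_Ico_consecutive (fun p => (2*I).choose p * (2*J).choose (I+J-p))
      (Nat.zero_le (I+1)) (by omega : I+1 ≤ I+J+1)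
    rw [← Finset.range_eq_Ico, ← Finset.range_eq_Ico] at this
    rw [← this, Finset.sum_Ico_eq_sum_range]
    have hJ : I+J+1-(I+1) = J := by omega
    rw [hJ]
  rw [hsplit, Finset.sum_range_succ]
  have e1 : ∀ l, I+J-(I+1+l) = J-(l+1) := by intro l; omega
  have e2 : I + J - I = J := by omega
  simp_rw [e1, e2]
  have h2 : ∑ p ∈ Finset.range I, (2*I).choose p * (2*J).choose (I+J-p)
      = ∑ l ∈ Finset.range (min I J), (2*I).choose (I-(l+1)) * (2*J).choose (J-(l+1)) := by
    rw [← Finset.sum_range_reflect]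
    have : ∀ l ∈ Finset.range I,
        (2*I).choose (I-1-l) * (2*J).choose (I+J-(I-1-l))
          = (2*J).choose (J+l+1) * (2*I).choose (I-(l+1)) := by
      intro l hl
      rw [Finset.mem_range] at hl
      rw [mul_comm]
      congr 2
      · omega
      · omega
    rw [Finset.sum_congr rfl this]
    rw [halfSum J I]
    rw [Nat.min_comm]
    exact Finset.sum_congr rfl fun l _ => mul_comm _ _
  have h3 : ∑ l ∈ Finset.range J, (2*I).choose (I+1+l) * (2*J).choose (J-(l+1))
      = ∑ l ∈ Finset.range (min I J), (2*I).choose (I-(l+1)) * (2*J).choose (J-(l+1)) := by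
    have : ∀ l, I+1+l = I+l+1 := by intro l; omega
    simp_rw [this]
    exact halfSum I J
  rw [h2, h3]
  ring

end Combinatorics

section Moments

open Real Nat

lemma gmeas : Measurable fun x : ℝ =>
    (if 0 < x ∧ x < 1 then 1 / (Real.pi * Real.sqrt (x * (1 - x))) else 0) := by
  have hs : MeasurableSet {x : ℝ | 0 < x ∧ x < 1} := measurableSet_Ioo (a := (0:ℝ)) (b := 1)
  exact Measurable.ite hs (by fun_prop) measurable_const

lemma mAS_eq_Ioo (r : ℕ) :
    mAS r = ∫ x in Set.Ioo (0:ℝ) 1, x ^ r / (Real.pi * Real.sqrt (x * (1 - x))) := by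
  rw [mAS, arcsineLaw]
  rw [show (fun x : ℝ => ENNReal.ofReal
      (if 0 < x ∧ x < 1 then 1 / (Real.pi * Real.sqrt (x * (1 - x))) else 0))
    = (fun x : ℝ => ((Real.toNNReal
      (if 0 < x ∧ x < 1 then 1 / (Real.pi * Real.sqrt (x * (1 - x))) else 0) : NNReal) : ENNReal))
    from rfl]
  rw [integral_withDensity_eq_integral_smul (gmeas.real_toNNReal)]
  rw [← MeasureTheory.integral_indicator measurableSet_Ioo]
  congr 1
  ext x
  rw [NNReal.smul_def, smul_eq_mul]
  by_cases hx : 0 < x ∧ x < 1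
  · rw [if_pos hx, Set.indicator_of_mem (by exact hx : x ∈ Set.Ioo (0:ℝ) 1)]
    rw [Real.coe_toNNReal _ (by positivity)]
    ring
  · rw [if_neg hx, Set.indicator_of_notMem (by simpa [Set.mem_Ioo] using hx)]
    simp

noncomputable def K (r : ℕ) : ℝ :=
  ∫ x in Set.Ioo (0:ℝ) 1, x ^ ((r:ℝ) - 1/2) * (1-x) ^ (-(1/2):ℝ)

lemma step2 (r : ℕ) :
    ∫ x in Set.Ioo (0:ℝ) 1, x ^ r / (Real.pi * Real.sqrt (x * (1 - x)))
      = (1/Real.pi) * K r := by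
  rw [K, ← integral_const_mul]
  refine setIntegral_congr_fun measurableSet_Ioo fun x hx => ?_
  obtain ⟨hx0, hx1⟩ := hx
  have h1 : (0:ℝ) < 1 - x := by linarith
  rw [Real.sqrt_mul hx0.le, Real.sqrt_eq_rpow, Real.sqrt_eq_rpow]
  rw [show ((r:ℝ) - 1/2) = (r:ℝ) + (-(1/2)) by ring, Real.rpow_add hx0,
    Real.rpow_natCast, Real.rpow_neg hx0.le, Real.rpow_neg h1.le]
  have hx2 : (0:ℝ) < x ^ ((1:ℝ)/2) := Real.rpow_pos_of_pos hx0 _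
  have hx3 : (0:ℝ) < (1-x) ^ ((1:ℝ)/2) := Real.rpow_pos_of_pos h1 _
  rw [show (1/2 : ℝ) = ((1:ℝ)/2) by norm_num]
  field_simp

lemma step3 (r : ℕ) :
    Complex.betaIntegral ((r:ℂ) + 1/2) (1/2) = ((K r : ℝ) : ℂ) := by
  rw [Complex.betaIntegral, intervalIntegral.integral_of_le zero_le_one,
    MeasureTheory.integral_Ioc_eq_integral_Ioo, K]
  refine (setIntegral_congr_fun measurableSet_Ioo fun x hx => ?_).trans integral_ofReal
  obtain ⟨hx0, hx1⟩ := hx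
  have h1 : (0:ℝ) < 1 - x := by linarith
  have key : (x:ℂ) ^ ((r:ℂ) + 1/2 - 1) * (1 - (x:ℂ)) ^ ((1:ℂ)/2 - 1)
      = Complex.ofReal (x ^ ((r:ℝ) - 1/2) * (1-x) ^ (-(1/2):ℝ)) := by
    rw [Complex.ofReal_mul, Complex.ofReal_cpow hx0.le, Complex.ofReal_cpow h1.le]
    push_cast
    ring_nf
  exact key

lemma gamma_half (r : ℕ) :
    Real.Gamma ((r:ℝ) + 1/2) = (2*r)! * Real.sqrt π / (4^r * r !) := by
  induction r with
  | zero => norm_num [Real.Gamma_one_half_eq]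
  | succ n ih =>
    have hne : ((n:ℝ) + 1/2) ≠ 0 := by positivity
    have : ((n:ℝ) + 1 + 1/2) = ((n:ℝ) + 1/2) + 1 := by ring
    rw [Nat.cast_succ, this, Real.Gamma_add_one hne, ih]
    have hfac : ((2*(n+1))! : ℝ) = (2*n+2) * (2*n+1) * ((2*n)! : ℝ) := by
      have : 2*(n+1) = (2*n+1) + 1 := by ring
      rw [this, Nat.factorial_succ, Nat.factorial_succ]
      push_cast
      ring
    have hfac2 : ((n+1)! : ℝ) = (n+1) * (n ! : ℝ) := by
      rw [Nat.factorial_succ]; push_cast; ring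
    rw [hfac, hfac2]
    have h1 : (4:ℝ)^n ≠ 0 := by positivity
    have h2 : ((n ! : ℕ) : ℝ) ≠ 0 := by positivity
    field_simp
    ring

lemma K_eq (r : ℕ) : K r = Real.Gamma ((r:ℝ)+1/2) * Real.sqrt π / (r !) := by
  have hs : 0 < ((r:ℂ) + 1/2).re := by
    simp only [Complex.add_re, Complex.natCast_re]
    norm_num
    positivity
  have ht : 0 < ((1:ℂ)/2).re := by norm_num
  have hbeta := Complex.Gamma_mul_Gamma_eq_betaIntegral hs ht
  rw [step3] at hbeta
  have e1 : ((r:ℂ) + 1/2) + 1/2 = ((r:ℕ):ℂ) + 1 := by ring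
  rw [e1, Complex.Gamma_nat_eq_factorial] at hbeta
  have e2 : ((r:ℂ) + 1/2) = (((r:ℝ) + 1/2 : ℝ) : ℂ) := by push_cast; ring
  have e3 : ((1:ℂ)/2) = (((1:ℝ)/2 : ℝ) : ℂ) := by norm_num
  rw [e2, e3, Complex.Gamma_ofReal, Complex.Gamma_ofReal, Real.Gamma_one_half_eq] at hbeta
  have : ((Real.Gamma ((r:ℝ)+1/2) * Real.sqrt π : ℝ) : ℂ) = (((r ! : ℝ) * K r : ℝ) : ℂ) := by
    push_cast
    rw [hbeta]
  have hre := Complex.ofReal_inj.1 this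
  have hfne : ((r ! : ℕ) : ℝ) ≠ 0 := by positivity
  rw [eq_div_iff hfne]
  linear_combination -hre

lemma mAS_eq (r : ℕ) : mAS r = ((2*r).choose r : ℝ) / 4^r := by
  rw [mAS_eq_Ioo, step2, K_eq, gamma_half]
  have h4 : Real.sqrt π * Real.sqrt π = π := Real.mul_self_sqrt pi_pos.le
  have hch : ((2*r).choose r : ℝ) * (r ! : ℝ) * (r ! : ℝ) = ((2*r)! : ℝ) := by
    have h := Nat.choose_mul_factorial_mul_factorial (show r ≤ 2*r by omega)
    have h2 : 2*r - r = r := by omega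
    rw [h2] at h
    exact_mod_cast h
  have h1 : (4:ℝ)^r ≠ 0 := by positivity
  have h2 : ((r ! : ℕ) : ℝ) ≠ 0 := by positivity
  have h3 : Real.pi ≠ 0 := pi_ne_zero
  field_simp
  linear_combination (((2*r)! : ℕ) : ℝ) * h4 - π * hch

end Moments

lemma const_mul (m n : ℕ) :
    ((2:ℝ) ^ (-(2 * ((m:ℤ))) + 1) / Real.sqrt 2) * ((2:ℝ) ^ (-(2 * ((n:ℤ))) + 1) / Real.sqrt 2)
      = 2 / 4^(m+n) := by
  rw [div_mul_div_comm, Real.mul_self_sqrt (by norm_num : (0:ℝ) ≤ 2),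
    ← zpow_add₀ (two_ne_zero : (2:ℝ) ≠ 0)]
  have h4 : ((4:ℝ))^(m+n) = (2:ℝ)^(2*(m+n)) := by rw [pow_mul]; norm_num
  rw [h4, ← zpow_natCast (2:ℝ) (2*(m+n))]
  rw [div_eq_div_iff (by positivity) (by positivity)]
  rw [← zpow_add₀ (two_ne_zero : (2:ℝ) ≠ 0)]
  have : (-(2 * (m:ℤ)) + 1 + (-(2 * (n:ℤ)) + 1)) + (2*(m+n) : ℕ) = 2 := by push_cast; ring
  rw [this]
  norm_num

/-- The covariance representation for the Jacobi ensemble: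
`(D_k^{(J)} (D_k^{(J)})^T)_{i,j} = m_{i+j}(ν) − m_i(ν)·m_j(ν)`, where `ν` is the
arcsine law on `[0,1]`. -/
theorem DJac_mul_transpose_eq_arcsine_cov (k : ℕ) (hk : 1 ≤ k) (i j : Fin k) :
    (DJac k * (DJac k)ᵀ) i j =
      mAS ((i.1 + 1) + (j.1 + 1)) - mAS (i.1 + 1) * mAS (j.1 + 1) := by
  set I := i.1 + 1 with hI
  set J := j.1 + 1 with hJ
  have hIk : I ≤ k := i.2
  have hJk : J ≤ k := j.2
  have hLHS : (DJac k * (DJac k)ᵀ) i j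
      = (2 / 4^(I+J)) *
        ∑ l ∈ Finset.range (min I J), ((2*I).choose (I-(l+1)) * (2*J).choose (J-(l+1)) : ℝ) := by
    rw [Matrix.mul_apply]
    simp only [Matrix.transpose_apply, DJac]
    rw [Fin.sum_univ_eq_sum_range (fun L =>
      (if L ≤ i.1 then
          (2 : ℝ) ^ (-(2 * ((i.1 : ℤ) + 1)) + 1) / Real.sqrt 2 *
            ((2 * (i.1 + 1)).choose ((i.1 + 1) - (L + 1)) : ℝ) else 0) *
      (if L ≤ j.1 then
          (2 : ℝ) ^ (-(2 * ((j.1 : ℤ) + 1)) + 1) / Real.sqrt 2 *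
            ((2 * (j.1 + 1)).choose ((j.1 + 1) - (L + 1)) : ℝ) else 0)) k]
    rw [← Finset.sum_subset (Finset.range_subset_range.2 (le_trans (min_le_left I J) hIk))]
    · rw [Finset.mul_sum]
      refine Finset.sum_congr rfl fun l hl => ?_
      rw [Finset.mem_range, lt_min_iff] at hl
      rw [if_pos (by omega), if_pos (by omega)]
      have hc : ((i.1:ℤ) + 1) = (I:ℤ) := by rw [hI]; push_cast; ring
      have hc' : ((j.1:ℤ) + 1) = (J:ℤ) := by rw [hJ]; push_cast; ring
      rw [← hI, ← hJ, hc, hc']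
      rw [mul_mul_mul_comm, const_mul I J]
    · intro l hl hl'
      rw [Finset.mem_range] at hl
      rw [Finset.mem_range, lt_min_iff, not_and_or] at hl'
      rcases hl'.imp (fun h => show ¬ l ≤ i.1 by omega) (fun h => show ¬ l ≤ j.1 by omega)
          with h | h
      · rw [if_neg h, zero_mul]
      · rw [if_neg h, mul_zero]
  rw [hLHS, mAS_eq, mAS_eq, mAS_eq]
  have hv := vand I J
  have hvr : ((2*(I+J)).choose (I+J) : ℝ)
      = ((2*I).choose I : ℝ) * ((2*J).choose J : ℝ)
        + 2 * ∑ l ∈ Finset.range (min I J),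
            ((2*I).choose (I-(l+1)) * (2*J).choose (J-(l+1)) : ℝ) := by
    exact_mod_cast congrArg (Nat.cast : ℕ → ℝ) hv
  have hpow : (4:ℝ)^(I+J) = 4^I * 4^J := pow_add 4 I J
  have h1 : (4:ℝ)^(I+J) ≠ 0 := by positivity
  have e : (2:ℝ)/4^(I+J) * ∑ l ∈ Finset.range (min I J),
      ((2*I).choose (I-(l+1)) * (2*J).choose (J-(l+1)) : ℝ)
    = (2 * ∑ l ∈ Finset.range (min I J),
      ((2*I).choose (I-(l+1)) * (2*J).choose (J-(l+1)) : ℝ)) / 4^(I+J) := by ring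
  rw [e, div_mul_div_comm, ← hpow, div_sub_div_same]
  congr 1
  linarith [hvr]
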